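/- Let q ≥ 1 be a natural number, set n = q^4, and let V = {1,…,n}. Let W be an integer weight function on pairs of elements of V, let S ⊆ V×V satisfy Γ(u,v) ≤ 90·log₂ n for every (u,v) ∈ S, let U_i, U_j ⊆ V be sets with |U_i| = |U_j| = q^3, and let U'_1, …, U'_{q²} be pairwise disjoint subsets of V, with Δ_k defined accordingly for k ∈ {1,…,q²}. Let α ≥ 1 be a natural number and let A ⊆ {1,…,q²} be a set of indices such that 8·|Δ_k| ≥ 2^α·n for every k ∈ A. Then |A|·2^α ≤ 720·q²·log₂ n (i.e., |A| ≤ 720·√n·log₂(n)/2^α). -/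

import Mathlib

/-- `(u,v,w)` is a negative triangle for the weight function `W`. -/
abbrev NegTriangle {V : Type*} (W : V → V → ℤ) (u v w : V) : Prop :=
  W u v + W v w + W w u < 0

/-- `Γ(u,v)`: the number of `w` such that `(u,v,w)` is a negative triangle. -/
def gammaCount (n : ℕ) (W : Fin n → Fin n → ℤ) (u v : Fin n) : ℕ :=
  (Finset.univ.filter fun w => NegTriangle W u v w).card

/-- `Δ_k`: the pairs `(u,v) ∈ (U_i × U_j) ∩ S` having a negative-triangle partner
`w ∈ U'_k`. -/
def deltaSet (n : ℕ) (W : Fin n → Fin n → ℤ) (S : Finset (Fin n × Fin n))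
    (Ui Uj U'k : Finset (Fin n)) : Finset (Fin n × Fin n) :=
  ((Ui ×ˢ Uj) ∩ S).filter fun p => ∃ w ∈ U'k, NegTriangle W p.1 p.2 w

/-- With `n = q⁴`, a promise `Γ(u,v) ≤ 90·log₂ n` on every pair of
`S`, parts `U_i, U_j` of size `q³`, pairwise disjoint blocks `U'_1, …, U'_{q²}`, and
a set `A` of block indices `k` with `8·|Δ_k| ≥ 2^α·n` (for some `α ≥ 1`), one has
`|A|·2^α ≤ 720·q²·log₂ n`, i.e. `|A| ≤ 720·√n·log₂(n)/2^α`. -/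
theorem card_blocks_with_many_triangle_pairs (q : ℕ) (hq : 1 ≤ q)
    (W : Fin (q ^ 4) → Fin (q ^ 4) → ℤ)
    (S : Finset (Fin (q ^ 4) × Fin (q ^ 4)))
    (hS : ∀ p ∈ S, (gammaCount (q ^ 4) W p.1 p.2 : ℝ) ≤ 90 * Real.logb 2 ((q : ℝ) ^ 4))
    (Ui Uj : Finset (Fin (q ^ 4))) (hUi : Ui.card = q ^ 3) (hUj : Uj.card = q ^ 3)
    (U' : Fin (q ^ 2) → Finset (Fin (q ^ 4)))
    (hdisj : ∀ k l : Fin (q ^ 2), k ≠ l → Disjoint (U' k) (U' l))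
    (α : ℕ) (hα : 1 ≤ α)
    (A : Finset (Fin (q ^ 2)))
    (hA : ∀ k ∈ A, 2 ^ α * q ^ 4 ≤ 8 * (deltaSet (q ^ 4) W S Ui Uj (U' k)).card) :
    (A.card : ℝ) * 2 ^ α ≤ 720 * (q : ℝ) ^ 2 * Real.logb 2 ((q : ℝ) ^ 4) := by
  classical
  have hq0 : 0 < q := hq
  have hn0 : 0 < q ^ 4 := pow_pos hq0 4
  set T := (Ui ×ˢ Uj) ∩ S with hTdef
  have hTcard : T.card ≤ q ^ 6 := by
    calc T.card ≤ (Ui ×ˢ Uj).card := Finset.card_le_card Finset.inter_subset_left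
    _ = q ^ 3 * q ^ 3 := by rw [Finset.card_product, hUi, hUj]
    _ = q ^ 6 := by ring
  -- each pair lies in few Δ_k
  have key : ∀ p ∈ T, (A.filter fun k => p ∈ deltaSet (q ^ 4) W S Ui Uj (U' k)).card
      ≤ gammaCount (q ^ 4) W p.1 p.2 := by
    intro p hp
    apply Finset.card_le_card_of_injOn
      (fun k => if h : ∃ w ∈ U' k, NegTriangle W p.1 p.2 w then h.choose else p.1)
    · intro k hk
      have hk' := (Finset.mem_filter.mp hk).2
      rw [deltaSet, Finset.mem_filter] at hk'
      obtain ⟨-, h⟩ := hk'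
      simp only [dif_pos h]
      simpa [gammaCount] using h.choose_spec.2
    · intro k hk l hl hkl
      by_contra hne'
      have hk' := (Finset.mem_filter.mp (Finset.mem_coe.mp hk)).2
      rw [deltaSet, Finset.mem_filter] at hk'
      have hl' := (Finset.mem_filter.mp (Finset.mem_coe.mp hl)).2
      rw [deltaSet, Finset.mem_filter] at hl'
      obtain ⟨-, hke⟩ := hk'
      obtain ⟨-, hle⟩ := hl'
      simp only [dif_pos hke, dif_pos hle] at hkl
      exact (Finset.disjoint_left.mp (hdisj k l hne')) hke.choose_spec.1
        (hkl ▸ hle.choose_spec.1)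
  -- double counting
  have hsub : ∀ k : Fin (q ^ 2), deltaSet (q ^ 4) W S Ui Uj (U' k) ⊆ T := by
    intro k
    rw [hTdef]
    exact Finset.filter_subset _ _
  have hsum1 : ∀ k : Fin (q ^ 2), (deltaSet (q ^ 4) W S Ui Uj (U' k)).card
      = ∑ p ∈ T, if p ∈ deltaSet (q ^ 4) W S Ui Uj (U' k) then 1 else 0 := by
    intro k
    rw [← Finset.card_filter, Finset.filter_mem_eq_inter,
      Finset.inter_eq_right.mpr (hsub k)]
  have hswap : ∑ k ∈ A, (deltaSet (q ^ 4) W S Ui Uj (U' k)).card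
      = ∑ p ∈ T, (A.filter fun k => p ∈ deltaSet (q ^ 4) W S Ui Uj (U' k)).card := by
    simp_rw [hsum1, Finset.card_filter]
    exact Finset.sum_comm
  have h1 : A.card * (2 ^ α * q ^ 4) ≤ 8 * ∑ k ∈ A, (deltaSet (q ^ 4) W S Ui Uj (U' k)).card := by
    calc A.card * (2 ^ α * q ^ 4) = ∑ _k ∈ A, 2 ^ α * q ^ 4 := by
          rw [Finset.sum_const, smul_eq_mul]
    _ ≤ ∑ k ∈ A, 8 * (deltaSet (q ^ 4) W S Ui Uj (U' k)).card := Finset.sum_le_sum hA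
    _ = 8 * ∑ k ∈ A, (deltaSet (q ^ 4) W S Ui Uj (U' k)).card := by rw [Finset.mul_sum]
  have hlog0 : 0 ≤ Real.logb 2 ((q : ℝ) ^ 4) := by
    apply Real.logb_nonneg one_lt_two
    have h1q : (1 : ℝ) ≤ (q : ℝ) := by exact_mod_cast hq
    calc (1:ℝ) = 1 ^ 4 := by norm_num
    _ ≤ (q : ℝ) ^ 4 := by gcongr
  have h2 : ((∑ k ∈ A, (deltaSet (q ^ 4) W S Ui Uj (U' k)).card : ℕ) : ℝ)
      ≤ (q : ℝ) ^ 6 * (90 * Real.logb 2 ((q : ℝ) ^ 4)) := by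
    rw [hswap]
    push_cast
    calc ∑ p ∈ T, ((A.filter fun k => p ∈ deltaSet (q ^ 4) W S Ui Uj (U' k)).card : ℝ)
        ≤ ∑ p ∈ T, (90 * Real.logb 2 ((q : ℝ) ^ 4)) := by
          apply Finset.sum_le_sum
          intro p hp
          have hpS : p ∈ S := (Finset.mem_inter.mp hp).2
          calc ((A.filter fun k => p ∈ deltaSet (q ^ 4) W S Ui Uj (U' k)).card : ℝ)
              ≤ (gammaCount (q ^ 4) W p.1 p.2 : ℝ) := by exact_mod_cast key p hp
          _ ≤ 90 * Real.logb 2 ((q : ℝ) ^ 4) := hS p hpS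
    _ = (T.card : ℝ) * (90 * Real.logb 2 ((q : ℝ) ^ 4)) := by
          rw [Finset.sum_const, nsmul_eq_mul]
    _ ≤ (q : ℝ) ^ 6 * (90 * Real.logb 2 ((q : ℝ) ^ 4)) := by
          apply mul_le_mul_of_nonneg_right _ (by positivity)
          exact_mod_cast hTcard
  have h1' : ((A.card : ℝ) * 2 ^ α) * (q : ℝ) ^ 4
      ≤ 8 * ((∑ k ∈ A, (deltaSet (q ^ 4) W S Ui Uj (U' k)).card : ℕ) : ℝ) := by
    calc (A.card : ℝ) * 2 ^ α * (q : ℝ) ^ 4 = ((A.card * (2 ^ α * q ^ 4) : ℕ) : ℝ) := by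
          push_cast; ring
    _ ≤ ((8 * ∑ k ∈ A, (deltaSet (q ^ 4) W S Ui Uj (U' k)).card : ℕ) : ℝ) := by
          exact_mod_cast h1
    _ = 8 * ((∑ k ∈ A, (deltaSet (q ^ 4) W S Ui Uj (U' k)).card : ℕ) : ℝ) := by push_cast; ring
  have hq4 : (0 : ℝ) < (q : ℝ) ^ 4 := by positivity
  rw [← mul_le_mul_iff_of_pos_right hq4]
  calc (A.card : ℝ) * 2 ^ α * (q : ℝ) ^ 4
      ≤ 8 * ((q : ℝ) ^ 6 * (90 * Real.logb 2 ((q : ℝ) ^ 4))) :=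
        h1'.trans (by linarith [h2])
  _ = 720 * (q : ℝ) ^ 2 * Real.logb 2 ((q : ℝ) ^ 4) * (q : ℝ) ^ 4 := by ring
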